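/- For every k ≥ 2, there exists a (k+1)-regular graph of order 2k + 2 which has a k-conversion set of size k. -/

import Mathlib

open scoped Classical

noncomputable def convStep {V : Type*} [Fintype V] (G : SimpleGraph V) (k : ℕ)
    (S : Finset V) : Finset V :=
  S ∪ Finset.univ.filter fun v => k ≤ (S.filter fun u => G.Adj v u).card

def IsConversionSet {V : Type*} [Fintype V] (G : SimpleGraph V) (k : ℕ)
    (S : Finset V) : Prop :=
  ∃ t : ℕ, (convStep G k)^[t] S = Finset.univ

noncomputable def convNum {V : Type*} [Fintype V] (G : SimpleGraph V) (k : ℕ) : ℕ :=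
  sInf {n : ℕ | ∃ S : Finset V, IsConversionSet G k S ∧ S.card = n}

def IndepFinset {V : Type*} (G : SimpleGraph V) (S : Finset V) : Prop :=
  ∀ v ∈ S, ∀ w ∈ S, ¬ G.Adj v w

theorem stmt6 (k : ℕ) (hk : 2 ≤ k) :
    ∃ G : SimpleGraph (Fin (2 * k + 2)), G.IsRegularOfDegree (k + 1) ∧
      ∃ S : Finset (Fin (2 * k + 2)), IsConversionSet G k S ∧ S.card = k := by
  set n := 2 * k + 2 with hn
  -- complete bipartite graph: sides determined by v.val < k+1
  set G : SimpleGraph (Fin n) :=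
    { Adj := fun v w => (v.val < k + 1) ≠ (w.val < k + 1)
      symm := ⟨fun v w h => Ne.symm h⟩
      loopless := ⟨fun v h => h rfl⟩ } with hG
  have hAdj : ∀ v w : Fin n, G.Adj v w ↔ ((v.val < k + 1) ≠ (w.val < k + 1)) := by
    intro v w; rfl
  -- card of half-sets
  have hcardA : (Finset.univ.filter fun w : Fin n => w.val < k + 1).card = k + 1 := by
    have h1 : (Finset.univ.filter fun w : Fin n => w.val < k + 1)
        = Finset.Iio (⟨k + 1, by omega⟩ : Fin n) := by
      ext v; simp [Fin.lt_def]
    rw [h1, Fin.card_Iio]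
  have hcardB : (Finset.univ.filter fun w : Fin n => ¬ w.val < k + 1).card = k + 1 := by
    have := Finset.card_filter_add_card_filter_not
      (s := (Finset.univ : Finset (Fin n))) (p := fun w : Fin n => w.val < k + 1)
    have hu : (Finset.univ : Finset (Fin n)).card = n := by simp
    omega
  refine ⟨G, ?_, ?_⟩
  · intro v
    rw [SimpleGraph.degree, SimpleGraph.neighborFinset_eq_filter]
    by_cases hv : v.val < k + 1
    · have h2 : (Finset.univ.filter (G.Adj v))
          = Finset.univ.filter fun w : Fin n => ¬ w.val < k + 1 := by
        ext w
        simp only [Finset.mem_filter, Finset.mem_univ, true_and, hAdj, hv]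
        tauto
      exact (congrArg Finset.card (Finset.filter_congr_decidable Finset.univ _ _)).trans
        ((congrArg Finset.card h2).trans hcardB)
    · have h2 : (Finset.univ.filter (G.Adj v))
          = Finset.univ.filter fun w : Fin n => w.val < k + 1 := by
        ext w
        simp only [Finset.mem_filter, Finset.mem_univ, true_and, hAdj, hv]
        tauto
      exact (congrArg Finset.card (Finset.filter_congr_decidable Finset.univ _ _)).trans
        ((congrArg Finset.card h2).trans hcardA)
  · set S : Finset (Fin n) := Finset.univ.filter fun v : Fin n => v.val < k with hS
    have hcardS : S.card = k := by
      have h1 : S = Finset.Iio (⟨k, by omega⟩ : Fin n) := by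
        ext v; simp [hS, Fin.lt_def]
      rw [h1, Fin.card_Iio]
    have hmem : ∀ (T : Finset (Fin n)) (v : Fin n),
        v ∈ convStep G k T ↔ (v ∈ T ∨ k ≤ (T.filter fun u => G.Adj v u).card) := by
      intro T v
      simp [convStep]
      convert Iff.rfl
    have hstep1 : ∀ w : Fin n, ¬ w.val < k + 1 → w ∈ convStep G k S := by
      intro w hw
      rw [hmem]
      right
      have h3 : (S.filter fun u => G.Adj w u) = S := by
        apply Finset.filter_eq_self.mpr
        intro u hu
        have hu' : u.val < k := by
          rw [hS] at hu
          simpa using hu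
        rw [hAdj]
        intro h
        rw [eq_iff_iff] at h
        exact hw (h.mpr (by omega))
      rw [h3, hcardS]
    refine ⟨S, ⟨2, ?_⟩, hcardS⟩
    have h2iter : (convStep G k)^[2] S = convStep G k (convStep G k S) := by
      simp [Function.iterate_succ, Function.comp_apply]
    rw [h2iter]
    apply Finset.eq_univ_of_forall
    intro v
    by_cases hv : v.val < k + 1
    · rw [hmem]
      right
      have hsub : (Finset.univ.filter fun w : Fin n => ¬ w.val < k + 1)
          ⊆ (convStep G k S).filter fun u => G.Adj v u := by
        intro b hb
        have hb' : ¬ b.val < k + 1 := by simpa using hb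
        refine Finset.mem_filter.mpr ⟨hstep1 b hb', ?_⟩
        rw [hAdj]
        intro h
        rw [eq_iff_iff] at h
        exact hb' (h.mp hv)
      have := Finset.card_le_card hsub
      omega
    · rw [hmem]
      left
      exact hstep1 v hv
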